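/- Mosco limit lower bound: suppose p_j → ∞, u_{p_j} ⇀ u weakly in L²(V,ν_G), and there is a constant C with ∑_{x,y} |u_{p_j}(y)-u_{p_j}(x)|^{p_j} w_{xy} ≤ C p_j for all j. Then |u(y)-u(x)| ≤ 1 whenever x ∼ y. -/

import Mathlib

open Filter

/-- Mosco limit lower bound: a weak limit of functions with controlled p_j-energy
satisfies the slope constraint. -/
theorem stmt8 {V : Type*} [Countable V] (w : V → V → ℝ) (d : V → ℝ)
    (hw : ∀ x y, 0 ≤ w x y) (hsymm : ∀ x y, w x y = w y x)
    (hd : ∀ x, d x = ∑' y, w x y) (hdpos : ∀ x, 0 < d x)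
    (p : ℕ → ℝ) (hp3 : ∀ j, 3 ≤ p j) (hp : Tendsto p atTop atTop)
    (uj : ℕ → V → ℝ) (u : V → ℝ)
    (hu2 : Summable fun x => (u x) ^ 2 * d x)
    (huj2 : ∀ j, Summable fun x => (uj j x) ^ 2 * d x)
    (hweak : ∀ φ : V → ℝ, (Summable fun x => (φ x) ^ 2 * d x) →
      Tendsto (fun j => ∑' x, uj j x * φ x * d x) atTop
        (nhds (∑' x, u x * φ x * d x)))
    (C : ℝ)
    (hsumm : ∀ j, Summable fun q : V × V => |uj j q.2 - uj j q.1| ^ (p j) * w q.1 q.2)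
    (hbound : ∀ j, ∑' q : V × V, |uj j q.2 - uj j q.1| ^ (p j) * w q.1 q.2 ≤ C * p j) :
    ∀ x y, w x y ≠ 0 → |u y - u x| ≤ 1 := by
  classical
  intro x y hwxy
  have hwpos : 0 < w x y := lt_of_le_of_ne (hw x y) (Ne.symm hwxy)
  have hppos : ∀ j, 0 < p j := fun j => lt_of_lt_of_le (by norm_num) (hp3 j)
  -- pointwise convergence
  have hpt : ∀ z, Tendsto (fun j => uj j z) atTop (nhds (u z)) := by
    intro z
    have hφ : Summable fun v => ((if v = z then (1:ℝ) else 0)) ^ 2 * d v := by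
      apply summable_of_ne_finset_zero (s := {z})
      intro b hb
      simp only [Finset.mem_singleton] at hb
      simp [hb]
    have h1 := hweak (fun v => if v = z then 1 else 0) hφ
    have hts : ∀ f : V → ℝ, (∑' v, f v * (if v = z then (1:ℝ) else 0) * d v) = f z * d z := by
      intro f
      rw [tsum_eq_single z]
      · simp
      · intro b hb; simp [hb]
    simp only [hts] at h1
    have hdz := (hdpos z).ne'
    have h2 := h1.div_const (d z)
    simpa [mul_div_assoc, div_self hdz] using h2
  have hdiff : Tendsto (fun j => |uj j y - uj j x|) atTop (nhds (|u y - u x|)) :=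
    ((hpt y).sub (hpt x)).abs
  have hterm : ∀ j, |uj j y - uj j x| ^ (p j) * w x y ≤ C * p j := by
    intro j
    calc |uj j y - uj j x| ^ (p j) * w x y
        ≤ ∑' q : V × V, |uj j q.2 - uj j q.1| ^ (p j) * w q.1 q.2 := by
          have := Summable.le_tsum (hsumm j) (x, y)
            (fun q _ => mul_nonneg (Real.rpow_nonneg (abs_nonneg _) _) (hw _ _))
          simpa using this
      _ ≤ C * p j := hbound j
  by_cases hC : 0 < C
  · have habs : ∀ j, |uj j y - uj j x| ≤ (C * p j / w x y) ^ (1 / p j) := by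
      intro j
      have h0 : (0:ℝ) ≤ |uj j y - uj j x| := abs_nonneg _
      have hbd : |uj j y - uj j x| ^ (p j) ≤ C * p j / w x y :=
        (le_div_iff₀ hwpos).mpr (hterm j)
      calc |uj j y - uj j x|
          = (|uj j y - uj j x| ^ (p j)) ^ (1 / p j) := by
            rw [← Real.rpow_mul h0, mul_one_div, div_self (hppos j).ne', Real.rpow_one]
        _ ≤ (C * p j / w x y) ^ (1 / p j) :=
            Real.rpow_le_rpow (Real.rpow_nonneg h0 _) hbd
              (by have := hppos j; positivity)
    have hlim : Tendsto (fun j => (C * p j / w x y) ^ (1 / p j)) atTop (nhds 1) := by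
      have heq : ∀ j, (C * p j / w x y) ^ (1 / p j)
          = Real.exp (Real.log (C / w x y) / p j + Real.log (p j) / p j) := by
        intro j
        have hbase : 0 < C * p j / w x y := by
          have := hppos j; positivity
        rw [Real.rpow_def_of_pos hbase, mul_one_div]
        congr 1
        rw [show C * p j / w x y = (C / w x y) * p j by ring,
          Real.log_mul (by positivity) (hppos j).ne', add_div]
      simp only [heq]
      have h1 : Tendsto (fun j => Real.log (C / w x y) / p j) atTop (nhds 0) :=
        tendsto_const_nhds.div_atTop hp
      have h2 : Tendsto (fun j => Real.log (p j) / p j) atTop (nhds 0) :=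
        (Real.isLittleO_log_id_atTop.tendsto_div_nhds_zero).comp hp
      have h3 := (Real.continuous_exp.tendsto 0).comp (by simpa using h1.add h2)
      simpa [Function.comp_def] using h3
    have := le_of_tendsto_of_tendsto' hdiff hlim habs
    exact this
  · -- C ≤ 0 case: all differences are zero
    have hz : ∀ j, |uj j y - uj j x| = 0 := by
      intro j
      have hnn : 0 ≤ |uj j y - uj j x| ^ (p j) * w x y :=
        mul_nonneg (Real.rpow_nonneg (abs_nonneg _) _) (hw _ _)
      have hCp : C * p j ≤ 0 :=
        mul_nonpos_of_nonpos_of_nonneg (not_lt.mp hC) (hppos j).le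
      have h0 : |uj j y - uj j x| ^ (p j) * w x y = 0 :=
        le_antisymm ((hterm j).trans hCp) hnn
      have h1 : |uj j y - uj j x| ^ (p j) = 0 := by
        rcases mul_eq_zero.mp h0 with h | h
        · exact h
        · exact absurd h hwxy
      exact (Real.rpow_eq_zero (abs_nonneg _) (hppos j).ne').mp h1
    have : |u y - u x| = 0 :=
      tendsto_nhds_unique hdiff
        ((tendsto_const_nhds : Tendsto (fun _ : ℕ => (0:ℝ)) atTop (nhds 0)).congr
          fun j => (hz j).symm)
    simp [this]
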